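/- arXiv:1809.01674 — 2 statements merged into one kernel-verified Lean document; each statement's English description precedes it below -/
import Mathlib

section
/- Consider τẋ = −x + [Wx + d(t)]₀^∞ with d(t) ≤ d̄ for all t ≥ 0 and some d̄ ∈ ℝⁿ_{>0}. If ρ([W]₀^∞) < 1, where [W]₀^∞ is the entrywise positive part of W, then all trajectories starting from nonnegative initial conditions remain bounded for all t ≥ 0. -/
open Matrix
open scoped ENNReal

noncomputable def specRad {n : Type*} [Fintype n] [DecidableEq n] (A : Matrix n n ℝ) : ℝ :=
  sSup {r : ℝ | ∃ μ : ℂ, Module.End.HasEigenvalue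
    (Matrix.toLin' (A.map (fun x => (x : ℂ)))) μ ∧ r = ‖μ‖}

def IsHurwitz {n : Type*} [Fintype n] [DecidableEq n] (A : Matrix n n ℝ) : Prop :=
  ∀ μ : ℂ, Module.End.HasEigenvalue (Matrix.toLin' (A.map (fun x => (x : ℂ)))) μ → μ.re < 0

def TotallyHurwitz {n : Type*} [Fintype n] [DecidableEq n] (A : Matrix n n ℝ) : Prop :=
  ∀ S : Finset n,
    IsHurwitz (A.submatrix (fun i : {x // x ∈ S} => (i : n)) (fun i : {x // x ∈ S} => (i : n)))

def IsPMatrix {n : Type*} [Fintype n] [DecidableEq n] (A : Matrix n n ℝ) : Prop :=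
  ∀ S : Finset n,
    0 < (A.submatrix (fun i : {x // x ∈ S} => (i : n)) (fun i : {x // x ∈ S} => (i : n))).det

noncomputable def opNorm {m n : Type*} [Fintype m] [Fintype n] [DecidableEq n]
    (A : Matrix m n ℝ) : ℝ :=
  ‖LinearMap.toContinuousLinearMap (Matrix.toEuclideanLin A)‖

def TotallyLStable {n : Type*} [Fintype n] [DecidableEq n] (W : Matrix n n ℝ) : Prop :=
  ∃ P : Matrix n n ℝ, P.PosDef ∧ ∀ σ : n → ℝ, (∀ i, σ i = 0 ∨ σ i = 1) →
    (-((-1 + Wᵀ * Matrix.diagonal σ) * P + P * (-1 + Matrix.diagonal σ * W))).PosDef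

/-- componentwise positive part -/
def posv {n : Type*} (y : n → ℝ) : n → ℝ := fun i => max (y i) 0

/-- componentwise clamp to [0, m i], allowing `m i = ∞` -/
noncomputable def clamp {n : Type*} (m : n → ℝ≥0∞) (y : n → ℝ) : n → ℝ :=
  fun i => (min (ENNReal.ofReal (y i)) (m i)).toReal

section StmtAux

open Filter Topology Set
open scoped NNReal

attribute [local instance] Matrix.linftyOpNormedRing Matrix.linftyOpNormedAlgebra

/-- From a strictly negative derivative gap, the function eventually lies below the
affine barrier to the right. -/
lemma stmt16_ev_lt {g : ℝ → ℝ} {g' s r : ℝ} (hg : HasDerivAt g g' s) (h : g' < r) :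
    ∀ᶠ z in 𝓝[>] s, g z < g s + (z - s) * r := by
  have h1 := (hasDerivAt_iff_tendsto_slope.1 hg).eventually (eventually_lt_nhds h)
  have h2 : 𝓝[>] s ≤ 𝓝[≠] s := nhdsWithin_mono s (fun z hz => ne_of_gt hz)
  filter_upwards [h1.filter_mono h2, self_mem_nhdsWithin] with z hz hzs
  rw [slope_def_field, div_lt_iff₀ (sub_pos.2 hzs)] at hz
  nlinarith

lemma stmt16_freq_slope {g : ℝ → ℝ} {g' s r : ℝ} (hg : HasDerivAt g g' s) (h : g' < r) :
    ∃ᶠ z in 𝓝[>] s, (z - s)⁻¹ * (g z - g s) < r := by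
  have h1 := (hasDerivAt_iff_tendsto_slope.1 hg).eventually (eventually_lt_nhds h)
  have h2 : 𝓝[>] s ≤ 𝓝[≠] s := nhdsWithin_mono s (fun z hz => ne_of_gt hz)
  refine ((h1.filter_mono h2).mono (fun z hz => ?_)).frequently
  rwa [slope_def_field, div_eq_inv_mul] at hz

/-- Existence of a positive vector `v` with `A v ≤ θ v`, `θ < 1`, from `specRad A < 1`
for an entrywise nonnegative matrix `A`. -/
lemma stmt16_perron {n : ℕ} (hn : 0 < n) (A : Matrix (Fin n) (Fin n) ℝ)
    (hA : ∀ i j, 0 ≤ A i j) (hρ : specRad A < 1) :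
    ∃ (v : Fin n → ℝ) (θ : ℝ), (∀ i, 1 ≤ v i) ∧ 0 ≤ θ ∧ θ < 1 ∧
      ∀ i, A.mulVec v i ≤ θ * v i := by
  haveI : Nonempty (Fin n) := ⟨⟨0, hn⟩⟩
  set Ac : Matrix (Fin n) (Fin n) ℂ := A.map (fun a => (a : ℂ)) with hAcdef
  have htl : Matrix.toLin' Ac = Matrix.toLinAlgEquiv' Ac := by
    apply LinearMap.ext; intro w
    rw [Matrix.toLin'_apply, Matrix.toLinAlgEquiv'_apply]
  have hspec : ∀ μ : ℂ, μ ∈ spectrum ℂ Ac ↔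
      Module.End.HasEigenvalue (Matrix.toLin' Ac) μ := by
    intro μ
    rw [htl, Module.End.hasEigenvalue_iff_mem_spectrum,
      AlgEquiv.spectrum_eq Matrix.toLinAlgEquiv' Ac]
  have h1 : ∀ μ ∈ spectrum ℂ Ac, ‖μ‖ < 1 := by
    intro μ hμ
    have hbdd : BddAbove {r : ℝ | ∃ μ : ℂ, Module.End.HasEigenvalue
        (Matrix.toLin' Ac) μ ∧ r = ‖μ‖} := by
      refine ⟨‖Ac‖, ?_⟩
      rintro r ⟨ν, hν, rfl⟩
      have : ν ∈ spectrum ℂ Ac := (hspec ν).2 hν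
      simpa using spectrum.norm_le_norm_of_mem this
    have hmem : ‖μ‖ ∈ {r : ℝ | ∃ μ : ℂ, Module.End.HasEigenvalue
        (Matrix.toLin' Ac) μ ∧ r = ‖μ‖} := ⟨μ, (hspec μ).1 hμ, rfl⟩
    have := le_csSup hbdd hmem
    exact lt_of_le_of_lt this hρ
  haveI : Nontrivial (Matrix (Fin n) (Fin n) ℂ) := by
    refine ⟨0, 1, fun h => ?_⟩
    have := congrFun (congrFun h ⟨0, hn⟩) ⟨0, hn⟩
    simp [Matrix.one_apply] at this
  have hne := spectrum.nonempty Ac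
  obtain ⟨μ₀, hμ₀, hmax⟩ := (spectrum.isCompact Ac).exists_isMaxOn hne
    (continuous_norm.continuousOn)
  have h2 : spectralRadius ℂ Ac < 1 := by
    have hle : spectralRadius ℂ Ac ≤ (‖μ₀‖₊ : ℝ≥0∞) := by
      refine iSup₂_le fun μ hμ => ?_
      exact_mod_cast hmax hμ
    refine lt_of_le_of_lt hle ?_
    rw [ENNReal.coe_lt_one_iff, ← NNReal.coe_lt_one, coe_nnnorm]
    exact h1 μ₀ hμ₀
  have hgel := spectrum.pow_nnnorm_pow_one_div_tendsto_nhds_spectralRadius Ac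
  have hev : ∀ᶠ k : ℕ in atTop, (‖Ac ^ k‖₊ : ℝ≥0∞) ^ (1 / (k : ℝ)) < 1 :=
    hgel.eventually_lt_const h2
  obtain ⟨k, hk, hk1⟩ := (hev.and (eventually_ge_atTop 1)).exists
  have hAck : ‖Ac ^ k‖ < 1 := by
    by_contra hcon
    push_neg at hcon
    have h1le : (1 : ℝ≥0∞) ≤ (‖Ac ^ k‖₊ : ℝ≥0∞) := by
      rw [ENNReal.one_le_coe_iff, ← NNReal.one_le_coe, coe_nnnorm]; exact hcon
    have := ENNReal.rpow_le_rpow h1le (by positivity : (0:ℝ) ≤ 1 / (k : ℝ))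
    rw [ENNReal.one_rpow] at this
    exact absurd (lt_of_le_of_lt this hk) (lt_irrefl _)
  -- entrywise nonneg powers
  have hpow : ∀ j : ℕ, ∀ i l, 0 ≤ (A ^ j) i l := by
    intro j
    induction j with
    | zero => intro i l; simp [Matrix.one_apply]; split <;> norm_num
    | succ m ih =>
      intro i l
      rw [pow_succ, Matrix.mul_apply]
      exact Finset.sum_nonneg fun m' _ => mul_nonneg (ih i m') (hA m' l)
  have hcoe : ∀ (M : Matrix (Fin n) (Fin n) ℝ),
      M.map (fun a => (a : ℂ)) = (algebraMap ℝ ℂ).mapMatrix M := by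
    intro M; rw [RingHom.mapMatrix_apply]; ext i j; simp [Matrix.map_apply]
  have hmapc : ∀ j : ℕ, Ac ^ j = (A ^ j).map (fun a => (a : ℂ)) := by
    intro j
    rw [hAcdef, hcoe, hcoe, ← map_pow]
  set c : ℝ := ‖Ac ^ k‖ with hcdef
  have hc0 : 0 ≤ c := norm_nonneg _
  have hrow : ∀ i, ∑ l, (A ^ k) i l ≤ c := by
    intro i
    have heq : ∑ l, (A ^ k) i l = ((∑ l, ‖(Ac ^ k) i l‖₊ : ℝ≥0) : ℝ) := by
      rw [NNReal.coe_sum]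
      refine Finset.sum_congr rfl fun l _ => ?_
      rw [coe_nnnorm, hmapc k, Matrix.map_apply, Complex.norm_real,
        Real.norm_eq_abs, abs_of_nonneg (hpow k i l)]
    rw [heq, hcdef, Matrix.linfty_opNorm_def, NNReal.coe_le_coe]
    exact Finset.le_sup (f := fun i => ∑ j, ‖(Ac ^ k) i j‖₊) (Finset.mem_univ i)
  set rs : ℕ → Fin n → ℝ := fun j i => ∑ l, (A ^ j) i l with hrs
  have hrs0 : ∀ i, rs 0 i = 1 := by
    intro i; simp [hrs, Matrix.one_apply]
  have hrsnn : ∀ j i, 0 ≤ rs j i := fun j i =>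
    Finset.sum_nonneg fun l _ => hpow j i l
  set v : Fin n → ℝ := fun i => ∑ j ∈ Finset.range k, rs j i with hv
  have hv1 : ∀ i, 1 ≤ v i := by
    intro i
    have h := Finset.single_le_sum (f := fun j => rs j i)
      (fun j _ => hrsnn j i) (Finset.mem_range.2 hk1)
    simpa [hrs0 i] using h
  have hAv : ∀ i, A.mulVec v i = v i - 1 + rs k i := by
    intro i
    have hstep : ∀ j, ∑ l, A i l * rs j l = rs (j + 1) i := by
      intro j
      show ∑ l, A i l * ∑ m, (A ^ j) l m = ∑ m, (A ^ (j + 1)) i m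
      rw [pow_succ']
      simp_rw [Matrix.mul_apply, Finset.mul_sum]
      rw [Finset.sum_comm]
    have h1' : A.mulVec v i = ∑ j ∈ Finset.range k, rs (j + 1) i := by
      show ∑ l, A i l * ∑ j ∈ Finset.range k, rs j l = _
      simp_rw [Finset.mul_sum]
      rw [Finset.sum_comm]
      exact Finset.sum_congr rfl fun j _ => hstep j
    rw [h1']
    have h2' : ∑ j ∈ Finset.range (k + 1), rs j i
        = (∑ j ∈ Finset.range k, rs (j + 1) i) + rs 0 i := Finset.sum_range_succ' _ _
    have h3' : ∑ j ∈ Finset.range (k + 1), rs j i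
        = (∑ j ∈ Finset.range k, rs j i) + rs k i := Finset.sum_range_succ _ _
    rw [hrs0 i] at h2'
    show _ = (∑ j ∈ Finset.range k, rs j i) - 1 + rs k i
    linarith [h2', h3']
  set V : ℝ := Finset.univ.sup' Finset.univ_nonempty v with hVdef
  have hvV : ∀ i, v i ≤ V := fun i => Finset.le_sup' v (Finset.mem_univ i)
  have hV1 : 1 ≤ V := le_trans (hv1 ⟨0, hn⟩) (hvV ⟨0, hn⟩)
  have hV0 : 0 < V := lt_of_lt_of_le one_pos hV1
  refine ⟨v, 1 - (1 - c) / V, hv1, ?_, ?_, ?_⟩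
  · have : (1 - c) / V ≤ 1 := by
      rw [div_le_one hV0]; linarith
    linarith
  · have : 0 < (1 - c) / V := div_pos (by linarith) hV0
    linarith
  · intro i
    have h6 : rs k i ≤ c := hrow i
    have h4 : A.mulVec v i ≤ v i - (1 - c) := by
      rw [hAv i]; linarith
    have h5 : (1 - c) / V * v i ≤ 1 - c := by
      have hq : 0 ≤ (1 - c) / V :=
        le_of_lt (div_pos (by linarith : (0:ℝ) < 1 - c) hV0)
      have := mul_le_mul_of_nonneg_left (hvV i) hq
      rwa [div_mul_cancel₀ _ (ne_of_gt hV0)] at this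
    have h7 : (1 - (1 - c) / V) * v i = v i - (1 - c) / V * v i := by ring
    rw [h7]; linarith

/-- Nonnegativity of trajectories. -/
lemma stmt16_nonneg {n : ℕ} {τ : ℝ} (hτ : 0 < τ) {W : Matrix (Fin n) (Fin n) ℝ}
    {d : ℝ → Fin n → ℝ} {x : ℝ → Fin n → ℝ} (hx0 : ∀ i, 0 ≤ x 0 i)
    (hx : ∀ t, 0 ≤ t → HasDerivAt x (τ⁻¹ • (-(x t) + posv (W.mulVec (x t) + d t))) t) :
    ∀ t, 0 ≤ t → ∀ i, 0 ≤ x t i := by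
  have hτi : 0 < τ⁻¹ := inv_pos.2 hτ
  have hderiv : ∀ s : ℝ, 0 ≤ s → ∀ i, HasDerivAt (fun z => x z i)
      (τ⁻¹ * (-(x s i) + posv (W.mulVec (x s) + d s) i)) s := by
    intro s hs i
    have h := hasDerivAt_pi.1 (hx s hs) i
    simpa using h
  intro t ht i
  have key := le_gronwallBound_of_liminf_deriv_right_le
    (f := fun s => -(x s i))
    (f' := fun s => -(τ⁻¹ * (-(x s i) + posv (W.mulVec (x s) + d s) i)))
    (δ := 0) (K := -τ⁻¹) (ε := 0) (a := 0) (b := t)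
    (fun s hs => (((hderiv s hs.1 i).continuousAt).neg).continuousWithinAt)
    (fun s hs r hr => stmt16_freq_slope ((hderiv s hs.1 i).neg) hr)
    (neg_nonpos.2 (hx0 i))
    (by
      intro s hs
      have hp : 0 ≤ posv (W.mulVec (x s) + d s) i := le_max_right _ _
      have h0 : 0 ≤ τ⁻¹ := le_of_lt hτi
      nlinarith)
    t ⟨ht, le_refl t⟩
  rw [gronwallBound_ε0] at key
  simp at key
  linarith

end StmtAux

open Filter Topology Set in
theorem stmt16 {n : ℕ} (τ : ℝ) (hτ : 0 < τ) (W : Matrix (Fin n) (Fin n) ℝ)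
    (dbar : Fin n → ℝ) (hdbar : ∀ i, 0 < dbar i)
    (d : ℝ → Fin n → ℝ) (hd : ∀ t, 0 ≤ t → ∀ i, d t i ≤ dbar i)
    (hρ : specRad (W.map (fun a => max a 0)) < 1)
    (x : ℝ → Fin n → ℝ) (hx0 : ∀ i, 0 ≤ x 0 i)
    (hx : ∀ t, 0 ≤ t → HasDerivAt x (τ⁻¹ • (-(x t) + posv (W.mulVec (x t) + d t))) t) :
    ∃ C : ℝ, ∀ t, 0 ≤ t → ‖x t‖ ≤ C := by
  rcases Nat.eq_zero_or_pos n with hn | hn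
  · subst hn
    refine ⟨0, fun t ht => ?_⟩
    have hxt : x t = 0 := funext fun i => absurd i.2 (Nat.not_lt_zero _)
    rw [hxt, norm_zero]
  · set A := W.map (fun a => max a 0) with hA
    have hAnn : ∀ i j, 0 ≤ A i j := fun i j => le_max_right _ _
    have hWA : ∀ i j, W i j ≤ A i j := fun i j => le_max_left _ _
    obtain ⟨v, θ, hv1, hθ0, hθ1, hAv⟩ := stmt16_perron hn A hAnn hρ
    have hvpos : ∀ i, 0 < v i := fun i => lt_of_lt_of_le one_pos (hv1 i)
    have hxnn := stmt16_nonneg hτ hx0 hx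
    haveI : Nonempty (Fin n) := ⟨⟨0, hn⟩⟩
    have hune : (Finset.univ : Finset (Fin n)).Nonempty := Finset.univ_nonempty
    set f : ℝ → ℝ := fun s => Finset.univ.sup' hune (fun i => x s i / v i) with hf
    have hgle : ∀ s i, x s i / v i ≤ f s := fun s i =>
      Finset.le_sup' (fun i => x s i / v i) (Finset.mem_univ i)
    have hfx : ∀ s i, x s i ≤ f s * v i := fun s i =>
      (div_le_iff₀ (hvpos i)).1 (hgle s i)
    have hf0 : ∀ s, 0 ≤ s → 0 ≤ f s := by
      intro s hs
      have h2 : 0 ≤ x s ⟨0, hn⟩ / v ⟨0, hn⟩ :=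
        div_nonneg (hxnn s hs _) (le_of_lt (hvpos _))
      linarith [hgle s ⟨0, hn⟩]
    set c' : ℝ := Finset.univ.sup' hune (fun i => dbar i / v i) with hc'
    have hc'le : ∀ i, dbar i ≤ c' * v i := fun i =>
      (div_le_iff₀ (hvpos i)).1 (Finset.le_sup' (fun i => dbar i / v i) (Finset.mem_univ i))
    have hc'pos : 0 < c' :=
      lt_of_lt_of_le (div_pos (hdbar ⟨0, hn⟩) (hvpos _))
        (Finset.le_sup' (fun i => dbar i / v i) (Finset.mem_univ ⟨0, hn⟩))
    have hτi : 0 < τ⁻¹ := inv_pos.2 hτ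
    set K : ℝ := τ⁻¹ * (θ - 1) with hK
    set ε : ℝ := τ⁻¹ * c' with hε
    have hKneg : K < 0 := mul_neg_of_pos_of_neg hτi (by linarith)
    have hεpos : 0 < ε := mul_pos hτi hc'pos
    have hderiv : ∀ s : ℝ, 0 ≤ s → ∀ i, HasDerivAt (fun z => x z i)
        (τ⁻¹ * (-(x s i) + posv (W.mulVec (x s) + d s) i)) s := by
      intro s hs i
      have h := hasDerivAt_pi.1 (hx s hs) i
      simpa using h
    have hnum : ∀ s, 0 ≤ s → ∀ i,
        posv (W.mulVec (x s) + d s) i ≤ θ * f s * v i + c' * v i := by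
      intro s hs i
      have hWx : W.mulVec (x s) i ≤ f s * (θ * v i) := by
        calc W.mulVec (x s) i = ∑ j, W i j * x s j := rfl
          _ ≤ ∑ j, A i j * x s j := Finset.sum_le_sum fun j _ =>
              mul_le_mul_of_nonneg_right (hWA i j) (hxnn s hs j)
          _ ≤ ∑ j, A i j * (f s * v j) := Finset.sum_le_sum fun j _ =>
              mul_le_mul_of_nonneg_left (hfx s j) (hAnn i j)
          _ = f s * A.mulVec v i := by
              rw [Matrix.mulVec, dotProduct, Finset.mul_sum]
              exact Finset.sum_congr rfl fun j _ => by ring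
          _ ≤ f s * (θ * v i) := mul_le_mul_of_nonneg_left (hAv i) (hf0 s hs)
      have hrhs : 0 ≤ θ * f s * v i + c' * v i :=
        add_nonneg (mul_nonneg (mul_nonneg hθ0 (hf0 s hs)) (le_of_lt (hvpos i)))
          (mul_nonneg (le_of_lt hc'pos) (le_of_lt (hvpos i)))
      show max ((W.mulVec (x s) + d s) i) 0 ≤ _
      apply max_le _ hrhs
      have hds := hd s hs i
      have hci := hc'le i
      simp only [Pi.add_apply]
      nlinarith [hWx]
    -- Gronwall
    have key : ∀ b, 0 ≤ b → ∀ t ∈ Icc (0:ℝ) b,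
        f t ≤ gronwallBound (f 0) K ε (t - 0) := by
      intro b hb
      apply le_gronwallBound_of_liminf_deriv_right_le
        (f' := fun s => K * f s + ε)
        (fun s hs => (ContinuousAt.finset_sup'_apply hune fun i _ =>
          ((hderiv s hs.1 i).div_const (v i)).continuousAt).continuousWithinAt)
        ?_ (le_refl (f 0)) (fun s _ => le_refl _)
      intro s hs r hr
      have hi : ∀ i : Fin n, ∀ᶠ z in 𝓝[>] s, x z i / v i < f s + (z - s) * r := by
        intro i
        rcases eq_or_lt_of_le (hgle s i) with heq | hlt
        · -- attaining component
          have hder := (hderiv s hs.1 i).div_const (v i)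
          have hxv : x s i = f s * v i := (div_eq_iff (ne_of_gt (hvpos i))).1 heq
          have hnum' := hnum s hs.1 i
          have hdle : (τ⁻¹ * (-(x s i) + posv (W.mulVec (x s) + d s) i)) / v i
              ≤ K * f s + ε := by
            rw [div_le_iff₀ (hvpos i), hxv]
            have expand : (K * f s + ε) * v i
                = τ⁻¹ * (-(f s * v i) + (θ * f s * v i + c' * v i)) := by
              rw [hK, hε]; ring
            rw [expand]
            apply mul_le_mul_of_nonneg_left _ (le_of_lt hτi)
            linarith [hnum']
          have hevt := stmt16_ev_lt hder (lt_of_le_of_lt hdle hr)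
          refine hevt.mono fun z hz => ?_
          rw [heq] at hz
          exact hz
        · -- non-attaining component
          have h1 : ContinuousAt (fun z => x z i / v i) s :=
            ((hderiv s hs.1 i).div_const (v i)).continuousAt
          have hcont' : ContinuousAt (fun z => f s + (z - s) * r - x z i / v i) s := by
            exact (continuousAt_const.add
              ((continuousAt_id.sub continuousAt_const).mul continuousAt_const)).sub h1
          have hval : 0 < f s + (s - s) * r - x s i / v i := by
            rw [sub_self, zero_mul, add_zero]; exact sub_pos.2 hlt
          have hev2 : ∀ᶠ z in 𝓝[>] s, 0 < f s + (z - s) * r - x z i / v i :=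
            (hcont'.eventually (eventually_gt_nhds hval)).filter_mono
              (nhdsWithin_le_nhds (s := Ioi s))
          refine hev2.mono fun z hz => ?_
          linarith
      have hall := (eventually_all.2 hi).and self_mem_nhdsWithin
      refine (hall.mono fun z hz => ?_).frequently
      obtain ⟨h1, h2⟩ := hz
      have hzs : 0 < z - s := sub_pos.2 h2
      have hfz : f z < f s + (z - s) * r :=
        (Finset.sup'_lt_iff hune).2 fun i _ => h1 i
      rw [inv_mul_eq_div, div_lt_iff₀ hzs]
      rw [mul_comm (z - s) r] at hfz
      linarith
    -- bound on the gronwallBound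
    set Cf : ℝ := f 0 - ε / K with hCf
    have hεK : ε / K ≤ 0 := div_nonpos_of_nonneg_of_nonpos (le_of_lt hεpos) (le_of_lt hKneg)
    have hf00 : 0 ≤ f 0 := hf0 0 le_rfl
    have hgb : ∀ s : ℝ, 0 ≤ s → gronwallBound (f 0) K ε s ≤ Cf := by
      intro s hs
      rw [gronwallBound_of_K_ne_0 (ne_of_lt hKneg)]
      have hKs : K * s ≤ 0 := mul_nonpos_of_nonpos_of_nonneg (le_of_lt hKneg) hs
      have he1 : Real.exp (K * s) ≤ 1 := by
        calc Real.exp (K * s) ≤ Real.exp 0 := Real.exp_le_exp.2 hKs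
          _ = 1 := Real.exp_zero
      have he0 : 0 < Real.exp (K * s) := Real.exp_pos _
      rw [hCf]
      nlinarith [mul_nonneg hf00 (sub_nonneg.2 he1),
        mul_nonpos_of_nonpos_of_nonneg hεK (le_of_lt he0)]
    have hCfnn : 0 ≤ Cf := by rw [hCf]; linarith
    set V : ℝ := Finset.univ.sup' hune v with hV
    have hvV : ∀ i, v i ≤ V := fun i => Finset.le_sup' v (Finset.mem_univ i)
    have hV1 : 1 ≤ V := le_trans (hv1 ⟨0, hn⟩) (hvV ⟨0, hn⟩)
    refine ⟨Cf * V, fun t ht => ?_⟩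
    have hft : f t ≤ Cf := by
      have h1 := key t ht t ⟨ht, le_rfl⟩
      have h2 := hgb (t - 0) (by linarith)
      linarith
    rw [pi_norm_le_iff_of_nonneg (mul_nonneg hCfnn (by linarith))]
    intro i
    rw [Real.norm_eq_abs, abs_of_nonneg (hxnn t ht i)]
    calc x t i ≤ f t * v i := hfx t i
      _ ≤ Cf * v i := mul_le_mul_of_nonneg_right hft (le_of_lt (hvpos i))
      _ ≤ Cf * V := mul_le_mul_of_nonneg_left (hvV i) hCfnn
end

section
/- For any K ∈ ℝ^{p×n} and B = [B^a; 0], the matrix W + BK has unchanged second block row [W^{pa}, W^{pp}], and hence: if I − (W + BK) is a P-matrix then I − W^{pp} is a P-matrix; if −I + (W + BK) is totally Hurwitz then −I + W^{pp} is totally Hurwitz; if ρ(|W + BK|) < 1 then ρ(|W^{pp}|) < 1; and ‖W + BK‖ ≥ ‖[W^{pa} W^{pp}]‖. -/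
open Matrix
open scoped ENNReal

section Aux

open Filter
open scoped NNReal Topology

attribute [local instance] Matrix.linftyOpNormedRing Matrix.linftyOpNormedAlgebra

lemma hasEigenvalue_toLin'_iff {n : Type*} [Fintype n] [DecidableEq n] (B : Matrix n n ℂ)
    (μ : ℂ) : Module.End.HasEigenvalue (Matrix.toLin' B) μ ↔ μ ∈ spectrum ℂ B := by
  rw [Module.End.hasEigenvalue_iff_mem_spectrum]
  have h : (Matrix.toLinAlgEquiv' B : (n → ℂ) →ₗ[ℂ] n → ℂ) = Matrix.toLin' B := rfl
  rw [← h, AlgEquiv.spectrum_eq]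

lemma specRad_set_finite {n : Type*} [Fintype n] [DecidableEq n] (A : Matrix n n ℝ) :
    Set.Finite {r : ℝ | ∃ μ : ℂ, Module.End.HasEigenvalue
      (Matrix.toLin' (A.map (fun x => (x : ℂ)))) μ ∧ r = ‖μ‖} := by
  apply Set.Finite.subset ((Matrix.finite_spectrum (A.map (fun x => (x : ℂ)))).image (fun μ : ℂ => ‖μ‖))
  rintro r ⟨μ, hμ, rfl⟩
  exact ⟨μ, (hasEigenvalue_toLin'_iff _ _).1 hμ, rfl⟩

lemma abs_lt_one_of_specRad_lt_one {n : Type*} [Fintype n] [DecidableEq n]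
    {A : Matrix n n ℝ} (h : specRad A < 1) {μ : ℂ}
    (hμ : Module.End.HasEigenvalue (Matrix.toLin' (A.map (fun x => (x : ℂ)))) μ) :
    ‖μ‖ < 1 := by
  refine lt_of_le_of_lt ?_ h
  exact le_csSup (specRad_set_finite A).bddAbove ⟨μ, hμ, rfl⟩

lemma specRad_lt_one_of_forall {n : Type*} [Fintype n] [DecidableEq n]
    {A : Matrix n n ℝ}
    (h : ∀ μ : ℂ, Module.End.HasEigenvalue (Matrix.toLin' (A.map (fun x => (x : ℂ)))) μ →
      ‖μ‖ < 1) : specRad A < 1 := by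
  set E := {r : ℝ | ∃ μ : ℂ, Module.End.HasEigenvalue
      (Matrix.toLin' (A.map (fun x => (x : ℂ)))) μ ∧ r = ‖μ‖} with hE
  rcases Set.eq_empty_or_nonempty E with he | hne
  · rw [specRad, ← hE, he, Real.sSup_empty]; norm_num
  · obtain ⟨μ, hμ, hr⟩ := hne.csSup_mem (specRad_set_finite A)
    rw [specRad, ← hE, hr]
    exact h μ hμ

lemma hasEigenvalue_submatrix {m n : Type*} [Fintype m] [DecidableEq m] [Fintype n]
    [DecidableEq n] (B : Matrix n n ℂ) (e : m ≃ n) {μ : ℂ}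
    (h : Module.End.HasEigenvalue (Matrix.toLin' (B.submatrix e e)) μ) :
    Module.End.HasEigenvalue (Matrix.toLin' B) μ := by
  obtain ⟨v, hv⟩ := h.exists_hasEigenvector
  have hmv : (B.submatrix e e) *ᵥ v = μ • v := by
    rw [← Matrix.toLin'_apply]; exact hv.apply_eq_smul
  rw [Matrix.submatrix_mulVec_equiv] at hmv
  have hw : B *ᵥ (v ∘ e.symm) = μ • (v ∘ e.symm) := by
    funext k
    have := congrFun hmv (e.symm k)
    simpa using this
  apply Module.End.hasEigenvalue_of_hasEigenvector (x := v ∘ e.symm)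
  constructor
  · rw [Module.End.mem_eigenspace_iff, Matrix.toLin'_apply]; exact hw
  · intro h0
    apply hv.2
    funext i
    have := congrFun h0 (e i)
    simpa using this

lemma isHurwitz_submatrix {m n : Type*} [Fintype m] [DecidableEq m] [Fintype n]
    [DecidableEq n] (A : Matrix n n ℝ) (e : m ≃ n) (h : IsHurwitz A) :
    IsHurwitz (A.submatrix e e) := by
  intro μ hμ
  apply h μ
  have heq : (A.submatrix e e).map (fun x => (x : ℂ)) =
      (A.map (fun x => (x : ℂ))).submatrix e e := rfl
  rw [heq] at hμ
  exact hasEigenvalue_submatrix _ e hμ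

lemma exists_specBound {S : Set ℂ} (hS : S.Finite) (h : ∀ μ ∈ S, ‖μ‖ < 1) :
    ∃ c : ℝ, 0 ≤ c ∧ c < 1 ∧ ∀ μ ∈ S, ‖μ‖ ≤ c := by
  rcases S.eq_empty_or_nonempty with rfl | hne
  · exact ⟨0, le_rfl, one_pos, by simp⟩
  · have hne' : ((fun μ : ℂ => ‖μ‖) '' S).Nonempty := hne.image _
    have hfin : ((fun μ : ℂ => ‖μ‖) '' S).Finite := hS.image _
    obtain ⟨μ₀, hμ₀, hc⟩ := hne'.csSup_mem hfin
    refine ⟨sSup ((fun μ : ℂ => ‖μ‖) '' S), ?_, ?_, ?_⟩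
    · rw [← hc]; positivity
    · rw [← hc]; exact h μ₀ hμ₀
    · intro μ hμ; exact le_csSup hfin.bddAbove ⟨μ, hμ, rfl⟩

lemma pow_norm_small {n : Type*} [Fintype n] [DecidableEq n] (Ac : Matrix n n ℂ)
    (hspec : ∀ μ ∈ spectrum ℂ Ac, ‖μ‖ < 1) {ε : ℝ} (hε : 0 < ε) :
    ∃ k : ℕ, ‖Ac ^ k‖ < ε := by
  haveI : CompleteSpace (Matrix n n ℂ) := FiniteDimensional.complete ℂ _
  obtain ⟨c, hc0, hc1, hcb⟩ := exists_specBound (Matrix.finite_spectrum Ac) hspec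
  have hρ : spectralRadius ℂ Ac ≤ ENNReal.ofReal c := by
    rw [spectralRadius]
    refine iSup₂_le fun k hk => ?_
    rw [← ENNReal.ofReal_coe_nnreal, coe_nnnorm]
    exact ENNReal.ofReal_le_ofReal (by simpa using hcb k hk)
  have hρ1 : spectralRadius ℂ Ac < 1 :=
    lt_of_le_of_lt hρ (ENNReal.ofReal_lt_one.2 hc1)
  obtain ⟨t, ht1, ht2⟩ := exists_between hρ1
  have hg := spectrum.pow_nnnorm_pow_one_div_tendsto_nhds_spectralRadius Ac
  have hev1 : ∀ᶠ k : ℕ in atTop, (‖Ac ^ k‖₊ : ℝ≥0∞) ^ (1/(k:ℝ)) < t :=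
    hg.eventually_lt_const ht1
  have hev2 : Tendsto (fun k : ℕ => t ^ k) atTop (𝓝 0) :=
    ENNReal.tendsto_pow_atTop_nhds_zero_of_lt_one ht2
  have hev3 : ∀ᶠ k : ℕ in atTop, t ^ k < ENNReal.ofReal ε :=
    hev2.eventually_lt_const (ENNReal.ofReal_pos.2 hε)
  obtain ⟨k, ⟨h1, h3⟩, hk1⟩ := ((hev1.and hev3).and (eventually_ge_atTop 1)).exists
  refine ⟨k, ?_⟩
  have hk0 : (0:ℝ) < (k:ℝ) := by exact_mod_cast hk1
  have h4 : ((‖Ac ^ k‖₊ : ℝ≥0∞) ^ (1/(k:ℝ))) ^ (k:ℝ) < t ^ (k:ℝ) :=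
    ENNReal.rpow_lt_rpow h1 hk0
  rw [← ENNReal.rpow_mul, one_div, inv_mul_cancel₀ (ne_of_gt hk0), ENNReal.rpow_one,
    ENNReal.rpow_natCast] at h4
  have h5 : (‖Ac ^ k‖₊ : ℝ≥0∞) < ENNReal.ofReal ε := h4.trans h3
  rw [← ENNReal.ofReal_coe_nnreal, coe_nnnorm] at h5
  exact (ENNReal.ofReal_lt_ofReal_iff hε).1 h5

lemma key_block {r s : ℕ} (A : Matrix (Fin r ⊕ Fin s) (Fin r ⊕ Fin s) ℝ)
    (M : Matrix (Fin s) (Fin s) ℝ)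
    (hA0 : ∀ i j, 0 ≤ A i j)
    (hMA : ∀ i j, M i j = A (Sum.inr i) (Sum.inr j))
    (hsr : specRad A < 1)
    {μ : ℂ} (hμ : Module.End.HasEigenvalue (Matrix.toLin' (M.map (fun x => (x : ℂ)))) μ) :
    ‖μ‖ < 1 := by
  by_contra hcon
  push_neg at hcon
  have hM0 : ∀ i j, 0 ≤ M i j := fun i j => (hMA i j) ▸ hA0 _ _
  obtain ⟨v, hv⟩ := hμ.exists_hasEigenvector
  have hmv : (M.map (fun x => (x : ℂ))) *ᵥ v = μ • v := by
    rw [← Matrix.toLin'_apply]; exact hv.apply_eq_smul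
  set u : Fin r ⊕ Fin s → ℝ := Sum.elim (fun _ => 0) (fun i => ‖v i‖) with hu
  have hu0 : ∀ j, 0 ≤ u j := by
    rintro (a | b) <;> simp [hu]
  obtain ⟨i0, hi0⟩ : ∃ i, v i ≠ 0 := Function.ne_iff.1 hv.2
  have hAu : ∀ j, u j ≤ (A *ᵥ u) j := by
    rintro (a | i)
    · simp only [hu, Sum.elim_inl, Matrix.mulVec, dotProduct]
      exact Finset.sum_nonneg fun j _ => mul_nonneg (hA0 _ _) (hu0 _)
    · have h1 : ‖v i‖ ≤ ∑ j, M i j * ‖v j‖ := by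
        calc ‖v i‖ ≤ ‖μ‖ * ‖v i‖ :=
              le_mul_of_one_le_left (by positivity) hcon
          _ = ‖μ * v i‖ := (norm_mul _ _).symm
          _ = ‖((M.map (fun x => (x : ℂ))) *ᵥ v) i‖ := by
              rw [hmv]; simp
          _ = ‖∑ j, (M i j : ℂ) * v j‖ := by
              simp [Matrix.mulVec, dotProduct, Matrix.map_apply]
          _ ≤ ∑ j, ‖(M i j : ℂ) * v j‖ := norm_sum_le _ _
          _ = ∑ j, M i j * ‖v j‖ := by
              refine Finset.sum_congr rfl fun j _ => ?_
              rw [norm_mul, Complex.norm_real, Real.norm_eq_abs, abs_of_nonneg (hM0 i j)]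
      have h2 : (A *ᵥ u) (Sum.inr i) = ∑ j, M i j * ‖v j‖ := by
        simp only [Matrix.mulVec, dotProduct, Fintype.sum_sum_type]
        simp [hu, hMA]
      rw [h2]
      simpa [hu] using h1
  have hpow0 : ∀ k : ℕ, ∀ i j, 0 ≤ (A ^ k) i j := by
    intro k
    induction k with
    | zero => intro i j; rw [pow_zero, Matrix.one_apply]; split <;> norm_num
    | succ k ih =>
        intro i j
        rw [pow_succ, Matrix.mul_apply]
        exact Finset.sum_nonneg fun l _ => mul_nonneg (ih _ _) (hA0 _ _)
  have hmono : ∀ (k : ℕ) (x y : Fin r ⊕ Fin s → ℝ), (∀ j, x j ≤ y j) →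
      ∀ j, ((A ^ k) *ᵥ x) j ≤ ((A ^ k) *ᵥ y) j := by
    intro k x y hxy j
    simp only [Matrix.mulVec, dotProduct]
    exact Finset.sum_le_sum fun l _ => mul_le_mul_of_nonneg_left (hxy l) (hpow0 k j l)
  have hk : ∀ k : ℕ, ∀ j, u j ≤ ((A ^ k) *ᵥ u) j := by
    intro k
    induction k with
    | zero => intro j; simp [Matrix.one_mulVec]
    | succ k ih =>
        intro j
        have heq : ((A ^ (k+1)) *ᵥ u) j = ((A ^ k) *ᵥ (A *ᵥ u)) j := by
          rw [Matrix.mulVec_mulVec, ← pow_succ]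
        rw [heq]
        exact (ih j).trans (hmono k u (A *ᵥ u) hAu j)
  set U : ℝ := ∑ j, u j with hUdef
  have hjU : ∀ j, u j ≤ U := fun j => Finset.single_le_sum (fun l _ => hu0 l) (Finset.mem_univ j)
  have hU0 : 0 ≤ U := Finset.sum_nonneg fun l _ => hu0 l
  have hc0 : 0 < u (Sum.inr i0) := by
    simp only [hu, Sum.elim_inr]
    exact norm_pos_iff.mpr hi0
  have hε : 0 < u (Sum.inr i0) / (U + 1) := by positivity
  have hspec : ∀ ν ∈ spectrum ℂ (A.map (fun x => (x : ℂ))), ‖ν‖ < 1 := by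
    intro ν hν
    exact abs_lt_one_of_specRad_lt_one hsr ((hasEigenvalue_toLin'_iff _ _).2 hν)
  obtain ⟨k, hk'⟩ := pow_norm_small (A.map (fun x => (x : ℂ))) hspec hε
  have hmap : (A.map (fun x => (x : ℂ))) ^ k = (A ^ k).map (fun x => (x : ℂ)) := by
    have h := map_pow ((algebraMap ℝ ℂ).mapMatrix) A k
    simp only [RingHom.mapMatrix_apply] at h
    exact h.symm
  have hrow : ∑ j, (A ^ k) (Sum.inr i0) j ≤ ‖(A.map (fun x => (x : ℂ))) ^ k‖ := by
    rw [hmap]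
    have h1 : (∑ j, ‖((A ^ k).map (fun x => (x : ℂ))) (Sum.inr i0) j‖₊)
        ≤ ‖(A ^ k).map (fun x => (x : ℂ))‖₊ := by
      rw [Matrix.linfty_opNNNorm_def]
      exact Finset.le_sup (f := fun i => ∑ j, ‖((A ^ k).map (fun x => (x:ℂ))) i j‖₊)
        (Finset.mem_univ (Sum.inr i0))
    have h2 : ∑ j, (A ^ k) (Sum.inr i0) j
        = ((∑ j, ‖((A ^ k).map (fun x => (x : ℂ))) (Sum.inr i0) j‖₊ : ℝ≥0) : ℝ) := by
      push_cast
      refine Finset.sum_congr rfl fun j _ => ?_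
      rw [Matrix.map_apply, Complex.norm_real, Real.norm_eq_abs, abs_of_nonneg (hpow0 k _ _)]
    rw [h2]
    exact_mod_cast h1
  have hchain : u (Sum.inr i0) ≤ ‖(A.map (fun x => (x : ℂ))) ^ k‖ * U := by
    calc u (Sum.inr i0) ≤ ((A ^ k) *ᵥ u) (Sum.inr i0) := hk k _
      _ = ∑ j, (A ^ k) (Sum.inr i0) j * u j := by simp [Matrix.mulVec, dotProduct]
      _ ≤ ∑ j, (A ^ k) (Sum.inr i0) j * U :=
          Finset.sum_le_sum fun j _ => mul_le_mul_of_nonneg_left (hjU j) (hpow0 k _ j)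
      _ = (∑ j, (A ^ k) (Sum.inr i0) j) * U := (Finset.sum_mul _ _ _).symm
      _ ≤ _ := mul_le_mul_of_nonneg_right hrow hU0
  have hlt : ‖(A.map (fun x => (x : ℂ))) ^ k‖ * U < u (Sum.inr i0) := by
    calc ‖(A.map (fun x => (x : ℂ))) ^ k‖ * U
        ≤ ‖(A.map (fun x => (x : ℂ))) ^ k‖ * (U + 1) :=
          mul_le_mul_of_nonneg_left (by linarith) (norm_nonneg _)
      _ < (u (Sum.inr i0) / (U + 1)) * (U + 1) :=
          mul_lt_mul_of_pos_right hk' (by linarith)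
      _ = u (Sum.inr i0) := div_mul_cancel₀ _ (by linarith)
  linarith

/-- equivalence between a finset and its image under an embedding -/
noncomputable def finsetMapEquiv {α β : Type*} (f : α ↪ β) (S : Finset α) :
    {x // x ∈ S} ≃ {y // y ∈ S.map f} where
  toFun := fun i => ⟨f i.1, Finset.mem_map_of_mem f i.2⟩
  invFun := fun y => ⟨(Finset.mem_map.1 y.2).choose, (Finset.mem_map.1 y.2).choose_spec.1⟩
  left_inv := fun i => Subtype.ext
    (f.injective (Finset.mem_map.1 (Finset.mem_map_of_mem f i.2)).choose_spec.2)
  right_inv := fun y => Subtype.ext (Finset.mem_map.1 y.2).choose_spec.2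

end Aux

theorem stmt18 {r s p : ℕ} (Waa : Matrix (Fin r) (Fin r) ℝ) (Wap : Matrix (Fin r) (Fin s) ℝ)
    (Wpa : Matrix (Fin s) (Fin r) ℝ) (Wpp : Matrix (Fin s) (Fin s) ℝ)
    (Ba : Matrix (Fin r) (Fin p) ℝ) (K : Matrix (Fin p) (Fin r ⊕ Fin s) ℝ) :
    let W : Matrix (Fin r ⊕ Fin s) (Fin r ⊕ Fin s) ℝ := Matrix.fromBlocks Waa Wap Wpa Wpp
    let B : Matrix (Fin r ⊕ Fin s) (Fin p) ℝ := Matrix.of (Sum.elim (Ba : Fin r → Fin p → ℝ) (fun _ _ => 0))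
    let Wrow : Matrix (Fin s) (Fin r ⊕ Fin s) ℝ := Matrix.of (fun i => Sum.elim (Wpa i) (Wpp i))
    (∀ i : Fin s, ∀ j : Fin r ⊕ Fin s, (W + B * K) (Sum.inr i) j = Wrow i j) ∧
    (IsPMatrix (1 - (W + B * K)) → IsPMatrix (1 - Wpp)) ∧
    (TotallyHurwitz (-1 + (W + B * K)) → TotallyHurwitz (-1 + Wpp)) ∧
    (specRad ((W + B * K).map (fun a => |a|)) < 1 → specRad (Wpp.map (fun a => |a|)) < 1) ∧
    (opNorm Wrow ≤ opNorm (W + B * K)) := by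
  intro W B Wrow
  have hW : W = Matrix.fromBlocks Waa Wap Wpa Wpp := rfl
  have hB : B = Matrix.of (Sum.elim (Ba : Fin r → Fin p → ℝ) (fun _ _ => 0)) := rfl
  have hWrow : Wrow = Matrix.of (fun i => Sum.elim (Wpa i) (Wpp i)) := rfl
  have hrow : ∀ i : Fin s, ∀ j : Fin r ⊕ Fin s, (W + B * K) (Sum.inr i) j = Wrow i j := by
    intro i j
    have hBK : (B * K) (Sum.inr i) j = 0 := by
      rw [Matrix.mul_apply]
      apply Finset.sum_eq_zero
      intro k _
      rw [hB]
      exact zero_mul _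
    rw [Matrix.add_apply, hBK, add_zero, hW, hWrow]
    cases j with
    | inl a => simp [Matrix.fromBlocks]
    | inr b => simp [Matrix.fromBlocks]
  have hrr : ∀ i j : Fin s, (W + B * K) (Sum.inr i) (Sum.inr j) = Wpp i j := by
    intro i j
    rw [hrow i (Sum.inr j), hWrow]
    simp
  -- common submatrix identity
  have hsub : ∀ (X : Matrix (Fin r ⊕ Fin s) (Fin r ⊕ Fin s) ℝ)
      (Y : Matrix (Fin s) (Fin s) ℝ), (∀ i j, Y i j = X (Sum.inr i) (Sum.inr j)) →
      ∀ S : Finset (Fin s),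
      Y.submatrix (fun i : {x // x ∈ S} => (i : Fin s)) (fun i : {x // x ∈ S} => (i : Fin s)) =
      (X.submatrix
          (fun i : {x // x ∈ S.map (⟨Sum.inr, Sum.inr_injective⟩ : Fin s ↪ Fin r ⊕ Fin s)} => (i : Fin r ⊕ Fin s))
          (fun i : {x // x ∈ S.map (⟨Sum.inr, Sum.inr_injective⟩ : Fin s ↪ Fin r ⊕ Fin s)} => (i : Fin r ⊕ Fin s))
        ).submatrix (finsetMapEquiv (⟨Sum.inr, Sum.inr_injective⟩ : Fin s ↪ Fin r ⊕ Fin s) S) (finsetMapEquiv (⟨Sum.inr, Sum.inr_injective⟩ : Fin s ↪ Fin r ⊕ Fin s) S) := by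
    intro X Y h S
    ext i j
    simp only [Matrix.submatrix_apply, finsetMapEquiv, Equiv.coe_fn_mk]
    exact h i.1 j.1
  refine ⟨hrow, ?_, ?_, ?_, ?_⟩
  · -- P-matrix
    intro h S
    rw [hsub (1 - (W + B * K)) (1 - Wpp) (by
      intro i j
      simp only [Matrix.sub_apply, Matrix.one_apply, hrr i j]
      congr 1
      simp [Sum.inr.injEq]) S]
    rw [Matrix.det_submatrix_equiv_self]
    exact h _
  · -- Totally Hurwitz
    intro h S
    rw [hsub (-1 + (W + B * K)) (-1 + Wpp) (by
      intro i j
      simp only [Matrix.add_apply, Matrix.neg_apply, Matrix.one_apply, hrr i j]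
      congr 2
      simp [Sum.inr.injEq]) S]
    exact isHurwitz_submatrix _ _ (h _)
  · -- spectral radius
    intro h
    apply specRad_lt_one_of_forall
    intro μ hμ
    refine key_block ((W + B * K).map (fun a => |a|)) (Wpp.map (fun a => |a|)) ?_ ?_ h hμ
    · intro i j; exact abs_nonneg _
    · intro i j
      simp only [Matrix.map_apply]
      rw [hrr i j]
  · -- operator norm
    rw [opNorm, opNorm]
    refine ContinuousLinearMap.opNorm_le_bound _ (norm_nonneg _) fun x => ?_
    refine le_trans ?_ (ContinuousLinearMap.le_opNorm _ x)
    simp only [LinearMap.coe_toContinuousLinearMap']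
    rw [EuclideanSpace.norm_eq, EuclideanSpace.norm_eq]
    apply Real.sqrt_le_sqrt
    have hc1 : ∀ i : Fin s, (Matrix.toEuclideanLin Wrow x) i
        = ((W + B * K) *ᵥ (WithLp.equiv 2 _ x)) (Sum.inr i) := by
      intro i
      rw [Matrix.toEuclideanLin_apply, PiLp.toLp_apply]
      simp only [Matrix.mulVec, dotProduct]
      exact Finset.sum_congr rfl fun j _ => by rw [hrow i j]; rfl
    have hc2 : ∀ j, (Matrix.toEuclideanLin (W + B * K) x) j
        = ((W + B * K) *ᵥ (WithLp.equiv 2 _ x)) j := by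
      intro j
      rw [Matrix.toEuclideanLin_apply, PiLp.toLp_apply]; rfl
    calc ∑ i, ‖(Matrix.toEuclideanLin Wrow x) i‖ ^ 2
        = ∑ i, ‖((W + B * K) *ᵥ (WithLp.equiv 2 _ x)) (Sum.inr i)‖ ^ 2 := by
          refine Finset.sum_congr rfl fun i _ => by rw [hc1 i]
      _ ≤ ∑ j, ‖((W + B * K) *ᵥ (WithLp.equiv 2 _ x)) j‖ ^ 2 := by
          rw [Fintype.sum_sum_type]
          have : (0:ℝ) ≤ ∑ a, ‖((W + B * K) *ᵥ (WithLp.equiv 2 _ x)) (Sum.inl a)‖ ^ 2 :=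
            Finset.sum_nonneg fun a _ => by positivity
          linarith
      _ = ∑ j, ‖(Matrix.toEuclideanLin (W + B * K) x) j‖ ^ 2 := by
          refine Finset.sum_congr rfl fun j _ => by rw [hc2 j]
end
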